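/- Occupation time estimates: let μ = α₋ δ_{−∞} + α₀ μ₀ + α₊ δ_{+∞} ∈ P(Z̄) with μ₀ ∈ P(ℤ), ε > 0, and R > R_{μ₀}(ε). For any nearest-neighbour trajectory w of length n starting at 0 with ‖ℓ(w) − μ‖ < 2^{−R}ε, the occupation times N^σ(w) = #{j ≤ n : w_j ∈ A^σ_R} satisfy |N^σ(w) − α_σ n| < 2εn for each σ ∈ {−,0,+}, and for each m ∈ {−R, −R+1, R−1, R} the occupation count N_m(w) = #{j ≤ n : w_j = m} satisfies N_m(w) < 3εn. -/

import Mathlib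

open MeasureTheory

/-- The two-point compactification `Z̄ = ℤ ∪ {−∞, +∞}` of `ℤ`:
`Sum.inl n` is the integer `n`, `Sum.inr false` is `−∞`, `Sum.inr true` is `+∞`. -/
abbrev Zbar : Type := ℤ ⊕ Bool

/-- The map `φ : Z̄ → [-1,1]`, `φ(k) = sign(k)(1 − 2^{−|k|})`, `φ(±∞) = ±1`. -/
noncomputable def phi : Zbar → ℝ
  | Sum.inr false => -1
  | Sum.inr true => 1
  | Sum.inl n => if 0 ≤ n then 1 - (2 : ℝ) ^ (-n) else -1 + (2 : ℝ) ^ n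

/-- Kantorovich–Rubinstein distance between the empirical measure of a trajectory `w`
and the measure `μ = α₋ δ_{−∞} + α₀ μ₀ + α₊ δ_{+∞} ∈ P(Z̄)`. -/
noncomputable def krDistEmp (n : ℕ) (w : ℕ → ℤ)
    (am a0 ap : ℝ) (μ₀ : Measure ℤ) : ℝ :=
  sSup {r : ℝ | ∃ f : Zbar → ℝ,
    (∀ a b : Zbar, |f a - f b| ≤ |phi a - phi b|) ∧ (∀ a, |f a| ≤ 1) ∧
    r = (1 / (n : ℝ)) * ∑ j ∈ Finset.Icc 1 n, f (Sum.inl (w j))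
          - (am * f (Sum.inr false) + a0 * ∫ z, f (Sum.inl z) ∂μ₀
              + ap * f (Sum.inr true))}

/-- `R_{μ₀}(ε) = min {R ∈ ℕ : μ₀(⟦−R+1, R−1⟧) > 1 − ε}`. -/
noncomputable def Rmu (μ₀ : Measure ℤ) (ε : ℝ) : ℕ :=
  sInf {R : ℕ | ENNReal.ofReal (1 - ε) < μ₀ {z : ℤ | -(R : ℤ) + 1 ≤ z ∧ z ≤ (R : ℤ) - 1}}

noncomputable def phiz (k : ℤ) : ℝ := phi (Sum.inl k)

lemma phiz_def (k : ℤ) : phiz k = if 0 ≤ k then 1 - (2 : ℝ) ^ (-k) else -1 + (2 : ℝ) ^ k := rfl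

lemma two_zpow_pos (k : ℤ) : (0:ℝ) < 2 ^ k := zpow_pos (by norm_num) k

lemma two_zpow_le_one {k : ℤ} (h : k ≤ 0) : (2:ℝ) ^ k ≤ 1 := by
  calc (2:ℝ) ^ k ≤ 2 ^ (0:ℤ) := zpow_le_zpow_right₀ (by norm_num) h
    _ = 1 := by norm_num

lemma one_sub_phiz (k : ℤ) : (2:ℝ) ^ (-|k|) ≤ 1 - phiz k := by
  rcases le_or_gt 0 k with h | h
  · rw [phiz_def, if_pos h, abs_of_nonneg h]; ring_nf; exact le_rfl
  · rw [phiz_def, if_neg (not_le.mpr h), abs_of_neg h, neg_neg]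
    have h1 : (2:ℝ) ^ k ≤ 1 := two_zpow_le_one h.le
    nlinarith [two_zpow_pos k]

lemma phiz_add_one_ge (k : ℤ) : (2:ℝ) ^ (-|k|) ≤ phiz k + 1 := by
  rcases le_or_gt 0 k with h | h
  · rw [phiz_def, if_pos h, abs_of_nonneg h]
    have h1 : (2:ℝ) ^ (-k) ≤ 1 := two_zpow_le_one (by omega)
    linarith
  · rw [phiz_def, if_neg (not_le.mpr h), abs_of_neg h, neg_neg]; linarith

lemma phiz_lt_one (k : ℤ) : phiz k < 1 := by
  have := one_sub_phiz k; have := two_zpow_pos (-|k|); linarith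

lemma neg_one_lt_phiz (k : ℤ) : -1 < phiz k := by
  have := phiz_add_one_ge k; have := two_zpow_pos (-|k|); linarith

lemma abs_phiz_le_one (k : ℤ) : |phiz k| ≤ 1 :=
  abs_le.mpr ⟨(neg_one_lt_phiz k).le, (phiz_lt_one k).le⟩

lemma gap1 (k : ℤ) : (2:ℝ) ^ (-|k| - 1) ≤ phiz (k + 1) - phiz k := by
  have e : ∀ m : ℤ, (2:ℝ) ^ m = 2 ^ (m - 1) * 2 := by
    intro m; rw [← zpow_add_one₀ (by norm_num : (2:ℝ) ≠ 0)]; ring_nf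
  rcases le_or_gt 0 k with h | h
  · rw [phiz_def, phiz_def, if_pos h, if_pos (by omega : (0:ℤ) ≤ k + 1),
      abs_of_nonneg h]
    have : (2:ℝ) ^ (-k) = 2 ^ (-k - 1) * 2 := e _
    have e2 : -(k+1) = -k - 1 := by ring
    rw [e2]; linarith
  · rcases eq_or_lt_of_le (by omega : k + 1 ≤ 0) with h2 | h2
    · have hk : k = -1 := by omega
      subst hk; norm_num [phiz_def]
    · rw [phiz_def, phiz_def, if_neg (by omega), if_neg (by omega), abs_of_neg h,
        neg_neg]
      have h1 : (2:ℝ) ^ (k+1) = 2 ^ k * 2 := by rw [e (k+1)]; ring_nf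
      have h3 : (2:ℝ) ^ (k - 1) ≤ 2 ^ k := zpow_le_zpow_right₀ (by norm_num) (by omega)
      linarith

lemma gap2 (k : ℤ) : (2:ℝ) ^ (-|k + 1| - 1) ≤ phiz (k + 1) - phiz k := by
  have e : ∀ m : ℤ, (2:ℝ) ^ m = 2 ^ (m - 1) * 2 := by
    intro m; rw [← zpow_add_one₀ (by norm_num : (2:ℝ) ≠ 0)]; ring_nf
  rcases le_or_gt 0 k with h | h
  · -- |k+1| = k+1, gap = 2^{-k-1} ≥ 2^{-(k+1)-1}
    rw [phiz_def, phiz_def, if_pos h, if_pos (by omega : (0:ℤ) ≤ k + 1),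
      abs_of_nonneg (by omega : (0:ℤ) ≤ k + 1)]
    have h1 : (2:ℝ) ^ (-k) = 2 ^ (-k - 1) * 2 := e _
    have e2 : -(k+1) = -k - 1 := by ring
    have h3 : (2:ℝ) ^ (-(k+1) - 1) ≤ 2 ^ (-k-1) := zpow_le_zpow_right₀ (by norm_num) (by omega)
    rw [e2] at h3 ⊢; linarith
  · rcases eq_or_lt_of_le (by omega : k + 1 ≤ 0) with h2 | h2
    · have hk : k = -1 := by omega
      subst hk; norm_num [phiz_def]
    · rw [phiz_def, phiz_def, if_neg (by omega), if_neg (by omega),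
        abs_of_neg h2, neg_neg]
      have h1 : (2:ℝ) ^ (k+1) = 2 ^ k * 2 := by rw [e (k+1)]; ring_nf
      have h3 : (2:ℝ) ^ (k + 1 - 1) ≤ 2 ^ k := zpow_le_zpow_right₀ (by norm_num) (by omega)
      linarith

lemma phiz_strictMono : StrictMono phiz := by
  apply strictMono_int_of_lt_succ
  intro k
  have := gap1 k
  have := two_zpow_pos (-|k| - 1)
  linarith

lemma phiz_mono : Monotone phiz := phiz_strictMono.monotone

lemma lip_of_indicator {c : ℝ} (hc : 0 ≤ c) (f : Zbar → ℝ)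
    (hvals : ∀ a, f a = 0 ∨ f a = c)
    (hgap : ∀ a b, f a = c → f b = 0 → c ≤ |phi a - phi b|) :
    ∀ a b, |f a - f b| ≤ |phi a - phi b| := by
  intro a b
  rcases hvals a with ha | ha <;> rcases hvals b with hb | hb
  · simp [ha, hb, abs_nonneg]
  · rw [ha, hb, zero_sub, abs_neg, abs_of_nonneg hc, abs_sub_comm (phi a)]
    exact hgap b a hb ha
  · rw [ha, hb, sub_zero, abs_of_nonneg hc]
    exact hgap a b ha hb
  · simp [ha, hb, abs_nonneg]

lemma master (am a0 ap : ℝ) (ham : 0 ≤ am) (ha0 : 0 ≤ a0) (hap : 0 ≤ ap)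
    (hsum : am + a0 + ap = 1)
    (μ₀ : Measure ℤ) [IsProbabilityMeasure μ₀]
    (n : ℕ) (hn : 1 ≤ n) (w : ℕ → ℤ) (B : ℝ)
    (hB : krDistEmp n w am a0 ap μ₀ < B)
    (f : Zbar → ℝ)
    (hlip : ∀ a b : Zbar, |f a - f b| ≤ |phi a - phi b|)
    (hbd : ∀ a, |f a| ≤ 1) :
    |(1 / (n : ℝ)) * ∑ j ∈ Finset.Icc 1 n, f (Sum.inl (w j))
      - (am * f (Sum.inr false) + a0 * ∫ z, f (Sum.inl z) ∂μ₀
          + ap * f (Sum.inr true))| < B := by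
  set S := {r : ℝ | ∃ f : Zbar → ℝ,
    (∀ a b : Zbar, |f a - f b| ≤ |phi a - phi b|) ∧ (∀ a, |f a| ≤ 1) ∧
    r = (1 / (n : ℝ)) * ∑ j ∈ Finset.Icc 1 n, f (Sum.inl (w j))
          - (am * f (Sum.inr false) + a0 * ∫ z, f (Sum.inl z) ∂μ₀
              + ap * f (Sum.inr true))} with hS
  have hkr : krDistEmp n w am a0 ap μ₀ = sSup S := rfl
  have hnpos : (0:ℝ) < n := by exact_mod_cast hn
  have key : ∀ g : Zbar → ℝ, (∀ a b : Zbar, |g a - g b| ≤ |phi a - phi b|) →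
      (∀ a, |g a| ≤ 1) →
      |(1 / (n : ℝ)) * ∑ j ∈ Finset.Icc 1 n, g (Sum.inl (w j))
        - (am * g (Sum.inr false) + a0 * ∫ z, g (Sum.inl z) ∂μ₀
            + ap * g (Sum.inr true))| ≤ 2 := by
    intro g hg1 hg2
    have h1 : |(1 / (n : ℝ)) * ∑ j ∈ Finset.Icc 1 n, g (Sum.inl (w j))| ≤ 1 := by
      rw [abs_mul]
      have hs : |∑ j ∈ Finset.Icc 1 n, g (Sum.inl (w j))| ≤ (n : ℝ) := by
        calc |∑ j ∈ Finset.Icc 1 n, g (Sum.inl (w j))|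
            ≤ ∑ j ∈ Finset.Icc 1 n, |g (Sum.inl (w j))| := Finset.abs_sum_le_sum_abs _ _
          _ ≤ ∑ j ∈ Finset.Icc 1 n, 1 := Finset.sum_le_sum (fun j _ => hg2 _)
          _ = ((Finset.Icc 1 n).card : ℝ) := by simp
          _ = (n : ℝ) := by rw [Nat.card_Icc]; simp
      calc |1 / (n:ℝ)| * |∑ j ∈ Finset.Icc 1 n, g (Sum.inl (w j))|
          ≤ |1 / (n:ℝ)| * n := mul_le_mul_of_nonneg_left hs (abs_nonneg _)
        _ = 1 := by rw [abs_of_pos (by positivity)]; field_simp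
    have hint : |∫ z, g (Sum.inl z) ∂μ₀| ≤ 1 := by
      have := norm_integral_le_of_norm_le_const (μ := μ₀)
        (f := fun z => g (Sum.inl z)) (C := 1)
        (Filter.Eventually.of_forall (fun z => by simpa using hg2 (Sum.inl z)))
      simpa using this
    have e1 : |am * g (Sum.inr false)| ≤ am := by
      rw [abs_mul, abs_of_nonneg ham]
      exact mul_le_of_le_one_right ham (hg2 _)
    have e2 : |a0 * ∫ z, g (Sum.inl z) ∂μ₀| ≤ a0 := by
      rw [abs_mul, abs_of_nonneg ha0]
      exact mul_le_of_le_one_right ha0 hint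
    have e3 : |ap * g (Sum.inr true)| ≤ ap := by
      rw [abs_mul, abs_of_nonneg hap]
      exact mul_le_of_le_one_right hap (hg2 _)
    have h2 : |am * g (Sum.inr false) + a0 * ∫ z, g (Sum.inl z) ∂μ₀
        + ap * g (Sum.inr true)| ≤ 1 := by
      calc |am * g (Sum.inr false) + a0 * ∫ z, g (Sum.inl z) ∂μ₀ + ap * g (Sum.inr true)|
          ≤ |am * g (Sum.inr false) + a0 * ∫ z, g (Sum.inl z) ∂μ₀| + |ap * g (Sum.inr true)| :=
            abs_add_le _ _
        _ ≤ |am * g (Sum.inr false)| + |a0 * ∫ z, g (Sum.inl z) ∂μ₀| + |ap * g (Sum.inr true)| := by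
            linarith [abs_add_le (am * g (Sum.inr false)) (a0 * ∫ z, g (Sum.inl z) ∂μ₀)]
        _ ≤ 1 := by linarith
    calc |(1 / (n : ℝ)) * ∑ j ∈ Finset.Icc 1 n, g (Sum.inl (w j))
        - (am * g (Sum.inr false) + a0 * ∫ z, g (Sum.inl z) ∂μ₀ + ap * g (Sum.inr true))|
        ≤ |(1 / (n : ℝ)) * ∑ j ∈ Finset.Icc 1 n, g (Sum.inl (w j))|
          + |am * g (Sum.inr false) + a0 * ∫ z, g (Sum.inl z) ∂μ₀ + ap * g (Sum.inr true)| :=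
          abs_sub _ _
      _ ≤ 2 := by linarith
  have hbdd : BddAbove S := by
    refine ⟨2, ?_⟩
    rintro r ⟨g, hg1, hg2, rfl⟩
    exact (le_abs_self _).trans (key g hg1 hg2)
  set r := (1 / (n : ℝ)) * ∑ j ∈ Finset.Icc 1 n, f (Sum.inl (w j))
      - (am * f (Sum.inr false) + a0 * ∫ z, f (Sum.inl z) ∂μ₀
          + ap * f (Sum.inr true)) with hr
  have hmem : r ∈ S := ⟨f, hlip, hbd, rfl⟩
  have hmem' : -r ∈ S := by
    refine ⟨fun a => -(f a), ?_, ?_, ?_⟩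
    · intro a b
      have : |-f a + f b| = |f a - f b| := by rw [← abs_neg]; ring_nf
      rw [show -f a - -f b = -f a + f b by ring, this]
      exact hlip a b
    · intro a; simpa using hbd a
    · have hni : ∫ z, -(f (Sum.inl z)) ∂μ₀ = -∫ z, f (Sum.inl z) ∂μ₀ := integral_neg _
      simp only [hni, Finset.sum_neg_distrib, hr]
      ring
  have h1 : r ≤ krDistEmp n w am a0 ap μ₀ := by rw [hkr]; exact le_csSup hbdd hmem
  have h2 : -r ≤ krDistEmp n w am a0 ap μ₀ := by rw [hkr]; exact le_csSup hbdd hmem'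
  exact abs_lt.mpr ⟨by linarith, by linarith⟩

def mid (R : ℕ) : Set ℤ := {z : ℤ | -(R : ℤ) + 1 ≤ z ∧ z ≤ (R : ℤ) - 1}

lemma mid_mono : Monotone mid := by
  intro a b hab z hz
  simp only [mid, Set.mem_setOf_eq] at hz ⊢
  omega

lemma Rmu_level (μ₀ : Measure ℤ) [IsProbabilityMeasure μ₀] (ε : ℝ) (hε : 0 < ε)
    (R' : ℕ) (h : Rmu μ₀ ε ≤ R') :
    ENNReal.ofReal (1 - ε) < μ₀ (mid R') := by
  have hne : {R : ℕ | ENNReal.ofReal (1 - ε) < μ₀ (mid R)}.Nonempty := by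
    have htend := tendsto_measure_iUnion_atTop (μ := μ₀) mid_mono
    have hun : (⋃ R : ℕ, mid R) = Set.univ := by
      ext z
      simp only [Set.mem_iUnion, Set.mem_univ, iff_true]
      exact ⟨(z.natAbs + 1), by simp only [mid, Set.mem_setOf_eq]; omega⟩
    rw [hun, measure_univ] at htend
    have hlt : ENNReal.ofReal (1 - ε) < 1 := by
      rw [ENNReal.ofReal_lt_one]; linarith
    obtain ⟨R0, hR0⟩ := ((tendsto_order.mp htend).1 _ hlt).exists
    exact ⟨R0, hR0⟩
  have hmem := Nat.sInf_mem hne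
  exact lt_of_lt_of_le hmem (measure_mono (mid_mono h))

lemma toReal_mid (μ₀ : Measure ℤ) [IsProbabilityMeasure μ₀] (ε : ℝ) (hε : 0 < ε)
    (R' : ℕ) (h : Rmu μ₀ ε ≤ R') :
    1 - ε < (μ₀ (mid R')).toReal := by
  have hlt := Rmu_level μ₀ ε hε R' h
  rcases le_or_gt (1 - ε) 0 with h0 | h0
  · have hpos : 0 < μ₀ (mid R') := lt_of_le_of_lt zero_le hlt
    have : 0 < (μ₀ (mid R')).toReal :=
      ENNReal.toReal_pos hpos.ne' (measure_ne_top _ _)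
    linarith
  · exact (ENNReal.ofReal_lt_iff_lt_toReal h0.le (measure_ne_top _ _)).mp hlt

lemma toReal_le_one (μ₀ : Measure ℤ) [IsProbabilityMeasure μ₀] (s : Set ℤ) :
    (μ₀ s).toReal ≤ 1 := by
  have := prob_le_one (μ := μ₀) (s := s)
  calc (μ₀ s).toReal ≤ (1 : ENNReal).toReal := ENNReal.toReal_mono (by norm_num) this
    _ = 1 := by simp

lemma tail_small (μ₀ : Measure ℤ) [IsProbabilityMeasure μ₀] (ε : ℝ) (hε : 0 < ε)
    (R' : ℕ) (h : Rmu μ₀ ε ≤ R') (s : Set ℤ) (hdisj : Disjoint s (mid R')) :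
    (μ₀ s).toReal < ε := by
  have h1 : μ₀ (s ∪ mid R') = μ₀ s + μ₀ (mid R') :=
    measure_union hdisj trivial
  have h2 : μ₀ s + μ₀ (mid R') ≤ 1 := h1 ▸ prob_le_one
  have h3 : (μ₀ s).toReal + (μ₀ (mid R')).toReal ≤ 1 := by
    rw [← ENNReal.toReal_add (measure_ne_top _ _) (measure_ne_top _ _)]
    calc (μ₀ s + μ₀ (mid R')).toReal ≤ (1 : ENNReal).toReal :=
        ENNReal.toReal_mono (by norm_num) h2
      _ = 1 := by simp
  have := toReal_mid μ₀ ε hε R' h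
  linarith

lemma sum_ite_card (n : ℕ) (w : ℕ → ℤ) (p : ℤ → Prop) [DecidablePred p] (c : ℝ) :
    ∑ j ∈ Finset.Icc 1 n, (if p (w j) then c else 0)
      = (((Finset.Icc 1 n).filter (fun j => p (w j))).card : ℝ) * c := by
  rw [← Finset.sum_filter, Finset.sum_const, nsmul_eq_mul]

lemma integral_ite (μ₀ : Measure ℤ) [IsProbabilityMeasure μ₀]
    (p : ℤ → Prop) [DecidablePred p] (c : ℝ) :
    ∫ z, (if p z then c else 0) ∂μ₀ = (μ₀ {z | p z}).toReal * c := by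
  have he : (fun z => if p z then c else 0)
      = Set.indicator {z : ℤ | p z} (fun _ => c) := by
    funext z; simp [Set.indicator_apply, Set.mem_setOf_eq]
  rw [he, integral_indicator_const c (show MeasurableSet {z : ℤ | p z} from trivial), smul_eq_mul]
  rfl

noncomputable def indF (p : ℤ → Prop) [DecidablePred p] (c um up : ℝ) : Zbar → ℝ
  | Sum.inl k => if p k then c else 0
  | Sum.inr false => um
  | Sum.inr true => up

lemma estimate_general (am a0 ap : ℝ) (ham : 0 ≤ am) (ha0 : 0 ≤ a0) (hap : 0 ≤ ap)
    (hsum : am + a0 + ap = 1)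
    (μ₀ : Measure ℤ) [IsProbabilityMeasure μ₀]
    (n : ℕ) (hn : 1 ≤ n) (w : ℕ → ℤ) (B : ℝ)
    (hB : krDistEmp n w am a0 ap μ₀ < B)
    (c : ℝ) (hc : 0 < c) (hc1 : c ≤ 1)
    (p : ℤ → Prop) [DecidablePred p] (um up : ℝ)
    (hum : um = 0 ∨ um = c) (hup : up = 0 ∨ up = c)
    (hgap : ∀ a b, indF p c um up a = c → indF p c um up b = 0 →
      c ≤ |phi a - phi b|) :
    |(1 / (n : ℝ)) * ((((Finset.Icc 1 n).filter (fun j => p (w j))).card : ℝ) * c)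
      - (am * um + a0 * ((μ₀ {z | p z}).toReal * c) + ap * up)| < B := by
  have hvals : ∀ a, indF p c um up a = 0 ∨ indF p c um up a = c := by
    rintro (k | b)
    · by_cases h : p k <;> simp [indF, h]
    · cases b
      · exact hum
      · exact hup
  have hlip := lip_of_indicator hc.le _ hvals hgap
  have hbd : ∀ a, |indF p c um up a| ≤ 1 := by
    intro a
    rcases hvals a with h | h <;> rw [h]
    · simp
    · rw [abs_of_pos hc]; exact hc1
  have h := master am a0 ap ham ha0 hap hsum μ₀ n hn w B hB _ hlip hbd
  have e1 : ∑ j ∈ Finset.Icc 1 n, indF p c um up (Sum.inl (w j))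
      = (((Finset.Icc 1 n).filter (fun j => p (w j))).card : ℝ) * c := by
    rw [← sum_ite_card n w p c]
    rfl
  have e2 : ∫ z, indF p c um up (Sum.inl z) ∂μ₀ = (μ₀ {z | p z}).toReal * c := by
    rw [← integral_ite μ₀ p c]
    rfl
  rw [e1, e2] at h
  exact h

lemma abs_div_scale {c nr y ε' : ℝ} (hc : 0 < c) (hn : 0 < nr)
    (h : |c / nr * y| < c * ε') : |y| < ε' * nr := by
  rw [abs_mul, abs_of_pos (div_pos hc hn)] at h
  have h2 : c / nr * |y| < c / nr * (ε' * nr) := by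
    rw [show c / nr * (ε' * nr) = c * ε' by field_simp]
    exact h
  exact lt_of_mul_lt_mul_left h2 (div_pos hc hn).le

lemma phi_inl (k : ℤ) : phi (Sum.inl k) = phiz k := rfl
lemma phi_minf : phi (Sum.inr false) = -1 := rfl
lemma phi_pinf : phi (Sum.inr true) = 1 := rfl

lemma gapcore_left (R : ℕ) (hR : 1 ≤ R) :
    (2:ℝ) ^ (-(R:ℤ)) ≤ phiz (-(R:ℤ) + 1) - phiz (-(R:ℤ)) := by
  have h := gap2 (-(R:ℤ))
  rw [abs_of_nonpos (by omega : -(R:ℤ) + 1 ≤ 0)] at h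
  rw [show -(-(-(R:ℤ) + 1)) - 1 = -(R:ℤ) by ring] at h
  exact h

lemma gapcore_right (R : ℕ) (hR : 1 ≤ R) :
    (2:ℝ) ^ (-(R:ℤ)) ≤ phiz (R:ℤ) - phiz ((R:ℤ) - 1) := by
  have h := gap1 ((R:ℤ) - 1)
  rw [abs_of_nonneg (by omega : (0:ℤ) ≤ (R:ℤ) - 1)] at h
  rw [show -((R:ℤ) - 1) - 1 = -(R:ℤ) by ring,
    show (R:ℤ) - 1 + 1 = (R:ℤ) by ring] at h
  exact h

lemma gap_left (R : ℕ) (hR : 1 ≤ R) :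
    ∀ a b, indF (fun k => k ≤ -(R:ℤ)) ((2:ℝ) ^ (-(R:ℤ))) ((2:ℝ) ^ (-(R:ℤ))) 0 a
        = (2:ℝ) ^ (-(R:ℤ)) →
      indF (fun k => k ≤ -(R:ℤ)) ((2:ℝ) ^ (-(R:ℤ))) ((2:ℝ) ^ (-(R:ℤ))) 0 b = 0 →
      (2:ℝ) ^ (-(R:ℤ)) ≤ |phi a - phi b| := by
  intro a b ha hb
  have hc : (0:ℝ) < (2:ℝ) ^ (-(R:ℤ)) := two_zpow_pos _
  have hA : phi a ≤ phiz (-(R:ℤ)) := by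
    rcases a with k | bb
    · by_cases hk : k ≤ -(R:ℤ)
      · exact phiz_mono hk
      · simp only [indF, if_neg hk] at ha; exact absurd ha.symm hc.ne'
    · cases bb
      · rw [phi_minf]; exact (neg_one_lt_phiz _).le
      · simp only [indF] at ha; exact absurd ha.symm hc.ne'
  have hB : phiz (-(R:ℤ) + 1) ≤ phi b := by
    rcases b with l | bb
    · by_cases hl : l ≤ -(R:ℤ)
      · simp only [indF, if_pos hl] at hb; exact absurd hb hc.ne'
      · exact phiz_mono (by omega)
    · cases bb
      · simp only [indF] at hb; exact absurd hb hc.ne'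
      · rw [phi_pinf]; exact (phiz_lt_one _).le
  have := gapcore_left R hR
  rw [abs_sub_comm]
  calc (2:ℝ) ^ (-(R:ℤ)) ≤ phi b - phi a := by linarith
    _ ≤ |phi b - phi a| := le_abs_self _

lemma gap_right (R : ℕ) (hR : 1 ≤ R) :
    ∀ a b, indF (fun k => (R:ℤ) ≤ k) ((2:ℝ) ^ (-(R:ℤ))) 0 ((2:ℝ) ^ (-(R:ℤ))) a
        = (2:ℝ) ^ (-(R:ℤ)) →
      indF (fun k => (R:ℤ) ≤ k) ((2:ℝ) ^ (-(R:ℤ))) 0 ((2:ℝ) ^ (-(R:ℤ))) b = 0 →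
      (2:ℝ) ^ (-(R:ℤ)) ≤ |phi a - phi b| := by
  intro a b ha hb
  have hc : (0:ℝ) < (2:ℝ) ^ (-(R:ℤ)) := two_zpow_pos _
  have hA : phiz (R:ℤ) ≤ phi a := by
    rcases a with k | bb
    · by_cases hk : (R:ℤ) ≤ k
      · exact phiz_mono hk
      · simp only [indF, if_neg hk] at ha; exact absurd ha.symm hc.ne'
    · cases bb
      · simp only [indF] at ha; exact absurd ha.symm hc.ne'
      · rw [phi_pinf]; exact (phiz_lt_one _).le
  have hB : phi b ≤ phiz ((R:ℤ) - 1) := by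
    rcases b with l | bb
    · by_cases hl : (R:ℤ) ≤ l
      · simp only [indF, if_pos hl] at hb; exact absurd hb hc.ne'
      · exact phiz_mono (by omega)
    · cases bb
      · rw [phi_minf]; exact (neg_one_lt_phiz _).le
      · simp only [indF] at hb; exact absurd hb hc.ne'
  have := gapcore_right R hR
  calc (2:ℝ) ^ (-(R:ℤ)) ≤ phi a - phi b := by linarith
    _ ≤ |phi a - phi b| := le_abs_self _

lemma gap_mid (R : ℕ) (hR : 1 ≤ R) :
    ∀ a b, indF (fun k => -(R:ℤ) + 1 ≤ k ∧ k ≤ (R:ℤ) - 1) ((2:ℝ) ^ (-(R:ℤ))) 0 0 a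
        = (2:ℝ) ^ (-(R:ℤ)) →
      indF (fun k => -(R:ℤ) + 1 ≤ k ∧ k ≤ (R:ℤ) - 1) ((2:ℝ) ^ (-(R:ℤ))) 0 0 b = 0 →
      (2:ℝ) ^ (-(R:ℤ)) ≤ |phi a - phi b| := by
  intro a b ha hb
  have hc : (0:ℝ) < (2:ℝ) ^ (-(R:ℤ)) := two_zpow_pos _
  obtain ⟨k, rfl, hk⟩ : ∃ k, a = Sum.inl k ∧ (-(R:ℤ) + 1 ≤ k ∧ k ≤ (R:ℤ) - 1) := by
    rcases a with k | bb
    · by_cases hk : -(R:ℤ) + 1 ≤ k ∧ k ≤ (R:ℤ) - 1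
      · exact ⟨k, rfl, hk⟩
      · simp only [indF, if_neg hk] at ha; exact absurd ha.symm hc.ne'
    · cases bb <;> (simp only [indF] at ha; exact absurd ha.symm hc.ne')
  have habsk : |k| ≤ (R:ℤ) := abs_le.mpr ⟨by omega, by omega⟩
  have hinf : (2:ℝ) ^ (-(R:ℤ)) ≤ 2 ^ (-|k|) :=
    zpow_le_zpow_right₀ (by norm_num) (neg_le_neg habsk)
  rw [phi_inl]
  rcases b with l | bb
  · rw [phi_inl]
    by_cases hl : -(R:ℤ) + 1 ≤ l ∧ l ≤ (R:ℤ) - 1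
    · simp only [indF, if_pos hl] at hb; exact absurd hb hc.ne'
    · have : l ≤ -(R:ℤ) ∨ (R:ℤ) ≤ l := by omega
      rcases this with hl2 | hl2
      · have h1 : phiz l ≤ phiz (-(R:ℤ)) := phiz_mono hl2
        have h2 : phiz (-(R:ℤ) + 1) ≤ phiz k := phiz_mono (by omega)
        have := gapcore_left R hR
        calc (2:ℝ) ^ (-(R:ℤ)) ≤ phiz k - phiz l := by linarith
          _ ≤ |phiz k - phiz l| := le_abs_self _
      · have h1 : phiz (R:ℤ) ≤ phiz l := phiz_mono hl2
        have h2 : phiz k ≤ phiz ((R:ℤ) - 1) := phiz_mono (by omega)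
        have := gapcore_right R hR
        rw [abs_sub_comm]
        calc (2:ℝ) ^ (-(R:ℤ)) ≤ phiz l - phiz k := by linarith
          _ ≤ |phiz l - phiz k| := le_abs_self _
  · cases bb
    · rw [phi_minf]
      have := phiz_add_one_ge k
      calc (2:ℝ) ^ (-(R:ℤ)) ≤ phiz k + 1 := by linarith
        _ = |phiz k - -1| := by
            rw [sub_neg_eq_add, abs_of_pos]; linarith [neg_one_lt_phiz k]
    · rw [phi_pinf]
      have := one_sub_phiz k
      rw [abs_sub_comm]
      calc (2:ℝ) ^ (-(R:ℤ)) ≤ 1 - phiz k := by linarith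
        _ ≤ |1 - phiz k| := le_abs_self _

lemma gap_single (m : ℤ) :
    ∀ a b, indF (fun k => k = m) ((2:ℝ) ^ (-|m| - 1)) 0 0 a = (2:ℝ) ^ (-|m| - 1) →
      indF (fun k => k = m) ((2:ℝ) ^ (-|m| - 1)) 0 0 b = 0 →
      (2:ℝ) ^ (-|m| - 1) ≤ |phi a - phi b| := by
  intro a b ha hb
  have hc : (0:ℝ) < (2:ℝ) ^ (-|m| - 1) := two_zpow_pos _
  obtain ⟨rfl⟩ : a = Sum.inl m := by
    rcases a with k | bb
    · by_cases hk : k = m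
      · rw [hk]
      · simp only [indF, if_neg hk] at ha; exact absurd ha.symm hc.ne'
    · cases bb <;> (simp only [indF] at ha; exact absurd ha.symm hc.ne')
  have hinf : (2:ℝ) ^ (-|m| - 1) ≤ 2 ^ (-|m|) :=
    zpow_le_zpow_right₀ (by norm_num) (by omega)
  rw [phi_inl]
  rcases b with l | bb
  · rw [phi_inl]
    have hl : l ≠ m := by
      intro h; subst h; simp only [indF, if_pos rfl] at hb; exact absurd hb hc.ne'
    have : l ≤ m - 1 ∨ m + 1 ≤ l := by omega
    rcases this with hl2 | hl2
    · have h1 : phiz l ≤ phiz (m - 1) := phiz_mono hl2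
      have h2 := gap2 (m - 1)
      rw [show m - 1 + 1 = m by ring] at h2
      calc (2:ℝ) ^ (-|m| - 1) ≤ phiz m - phiz l := by linarith
        _ ≤ |phiz m - phiz l| := le_abs_self _
    · have h1 : phiz (m + 1) ≤ phiz l := phiz_mono hl2
      have h2 := gap1 m
      rw [abs_sub_comm]
      calc (2:ℝ) ^ (-|m| - 1) ≤ phiz l - phiz m := by linarith
        _ ≤ |phiz l - phiz m| := le_abs_self _
  · cases bb
    · rw [phi_minf]
      have := phiz_add_one_ge m
      calc (2:ℝ) ^ (-|m| - 1) ≤ phiz m + 1 := by linarith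
        _ = |phiz m - -1| := by
            rw [sub_neg_eq_add, abs_of_pos]; linarith [neg_one_lt_phiz m]
    · rw [phi_pinf]
      have := one_sub_phiz m
      rw [abs_sub_comm]
      calc (2:ℝ) ^ (-|m| - 1) ≤ 1 - phiz m := by linarith
        _ ≤ |1 - phiz m| := le_abs_self _

set_option maxHeartbeats 2000000 in
/-- Occupation time estimates for a trajectory whose empirical measure is `2^{-R}ε`-close to
`μ = α₋ δ_{−∞} + α₀ μ₀ + α₊ δ_{+∞}`. -/
theorem occupation_time_estimates
    (am a0 ap : ℝ) (ham : 0 ≤ am) (ha0 : 0 ≤ a0) (hap : 0 ≤ ap)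
    (hsum : am + a0 + ap = 1)
    (μ₀ : Measure ℤ) [IsProbabilityMeasure μ₀] (ε : ℝ) (hε : 0 < ε)
    (R : ℕ) (hR : Rmu μ₀ ε < R)
    (n : ℕ) (hn : 1 ≤ n) (w : ℕ → ℤ) (hw0 : w 1 = 0)
    (hstep : ∀ j, 1 ≤ j → j < n → (w (j + 1) - w j = 1 ∨ w (j + 1) - w j = -1))
    (hclose : krDistEmp n w am a0 ap μ₀ < (2 : ℝ) ^ (-(R : ℤ)) * ε) :
    |(((Finset.Icc 1 n).filter (fun j => w j ≤ -(R : ℤ))).card : ℝ) - am * n|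
        < 2 * ε * n ∧
    |(((Finset.Icc 1 n).filter
        (fun j => -(R : ℤ) + 1 ≤ w j ∧ w j ≤ (R : ℤ) - 1)).card : ℝ) - a0 * n|
        < 2 * ε * n ∧
    |(((Finset.Icc 1 n).filter (fun j => (R : ℤ) ≤ w j)).card : ℝ) - ap * n|
        < 2 * ε * n ∧
    ∀ m ∈ ({-(R : ℤ), -(R : ℤ) + 1, (R : ℤ) - 1, (R : ℤ)} : Set ℤ),
      (((Finset.Icc 1 n).filter (fun j => w j = m)).card : ℝ) < 3 * ε * n := by
  have hR1 : 1 ≤ R := by omega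
  have hnr : (0:ℝ) < n := by exact_mod_cast hn
  have ha0le : a0 ≤ 1 := by linarith
  set c : ℝ := (2:ℝ) ^ (-(R:ℤ)) with hcdef
  have hc : (0:ℝ) < c := two_zpow_pos _
  have hc1 : c ≤ 1 := two_zpow_le_one (by omega)
  have hRle : Rmu μ₀ ε ≤ R := hR.le
  have hRle1 : Rmu μ₀ ε ≤ R - 1 := by omega
  have hcastR1 : ((R - 1 : ℕ) : ℤ) = (R:ℤ) - 1 := by omega
  constructor
  · -- left part
    have h := estimate_general am a0 ap ham ha0 hap hsum μ₀ n hn w _ hclose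
      c hc hc1 (fun k => k ≤ -(R:ℤ)) c 0 (Or.inr rfl) (Or.inl rfl) (gap_left R hR1)
    set N : ℝ := (((Finset.Icc 1 n).filter (fun j => w j ≤ -(R : ℤ))).card : ℝ) with hN
    set t : ℝ := (μ₀ {z : ℤ | z ≤ -(R:ℤ)}).toReal with ht
    have ht0 : 0 ≤ t := ENNReal.toReal_nonneg
    have htε : t < ε := by
      apply tail_small μ₀ ε hε R hRle
      apply Set.disjoint_left.mpr
      intro z hz hz2
      simp only [Set.mem_setOf_eq] at hz
      simp only [mid, Set.mem_setOf_eq] at hz2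
      omega
    set y : ℝ := N - (am + a0 * t) * n with hy
    have h2 : |c / (n:ℝ) * y| < c * ε := by
      have he : c / (n:ℝ) * y = (1 / (n : ℝ)) * (N * c)
          - (am * c + a0 * (t * c) + ap * 0) := by
        rw [hy]; field_simp; ring
      rw [he]; exact h
    have hy2 : |y| < ε * n := abs_div_scale hc hnr h2
    have hd : N - am * n = y + a0 * t * n := by rw [hy]; ring
    have habs : |N - am * n| ≤ |y| + a0 * t * n := by
      rw [hd]
      have h5 : |a0 * t * (n:ℝ)| = a0 * t * n :=
        abs_of_nonneg (mul_nonneg (mul_nonneg ha0 ht0) hnr.le)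
      calc |y + a0 * t * (n:ℝ)| ≤ |y| + |a0 * t * (n:ℝ)| := abs_add_le _ _
        _ = |y| + a0 * t * n := by rw [h5]
    have h3 : a0 * t * n ≤ t * n := by
      nlinarith [mul_nonneg (mul_nonneg (sub_nonneg.mpr ha0le) ht0) hnr.le]
    have h4 : t * n < ε * n := mul_lt_mul_of_pos_right htε hnr
    have : |N - am * n| < 2 * ε * n := by linarith
    exact this
  constructor
  · -- middle part
    have h := estimate_general am a0 ap ham ha0 hap hsum μ₀ n hn w _ hclose
      c hc hc1 (fun k => -(R:ℤ) + 1 ≤ k ∧ k ≤ (R:ℤ) - 1) 0 0 (Or.inl rfl)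
      (Or.inl rfl) (gap_mid R hR1)
    set N : ℝ := (((Finset.Icc 1 n).filter
      (fun j => -(R : ℤ) + 1 ≤ w j ∧ w j ≤ (R : ℤ) - 1)).card : ℝ) with hN
    set t : ℝ := (μ₀ {z : ℤ | -(R:ℤ) + 1 ≤ z ∧ z ≤ (R:ℤ) - 1}).toReal with ht
    have ht0 : 0 ≤ t := ENNReal.toReal_nonneg
    have ht1 : t ≤ 1 := toReal_le_one μ₀ _
    have htε : 1 - ε < t := toReal_mid μ₀ ε hε R hRle
    set y : ℝ := N - a0 * t * n with hy
    have h2 : |c / (n:ℝ) * y| < c * ε := by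
      have he : c / (n:ℝ) * y = (1 / (n : ℝ)) * (N * c)
          - (am * 0 + a0 * (t * c) + ap * 0) := by
        rw [hy]; field_simp; ring
      rw [he]; exact h
    have hy2 : |y| < ε * n := abs_div_scale hc hnr h2
    have hd : N - a0 * n = y + a0 * (t - 1) * n := by rw [hy]; ring
    have habs : |N - a0 * n| ≤ |y| + a0 * (1 - t) * n := by
      rw [hd]
      have h5 : |a0 * (t - 1) * (n:ℝ)| = a0 * (1 - t) * n := by
        rw [show a0 * (t - 1) * (n:ℝ) = -(a0 * (1 - t) * n) by ring, abs_neg]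
        exact abs_of_nonneg (mul_nonneg (mul_nonneg ha0 (by linarith)) hnr.le)
      calc |y + a0 * (t - 1) * (n:ℝ)| ≤ |y| + |a0 * (t - 1) * (n:ℝ)| := abs_add_le _ _
        _ = |y| + a0 * (1 - t) * n := by rw [h5]
    have h3 : a0 * (1 - t) * n ≤ (1 - t) * n := by
      nlinarith [mul_nonneg (mul_nonneg (sub_nonneg.mpr ha0le) (sub_nonneg.mpr ht1)) hnr.le]
    have h4 : (1 - t) * n < ε * n := mul_lt_mul_of_pos_right (by linarith) hnr
    have : |N - a0 * n| < 2 * ε * n := by linarith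
    exact this
  constructor
  · -- right part
    have h := estimate_general am a0 ap ham ha0 hap hsum μ₀ n hn w _ hclose
      c hc hc1 (fun k => (R:ℤ) ≤ k) 0 c (Or.inl rfl) (Or.inr rfl) (gap_right R hR1)
    set N : ℝ := (((Finset.Icc 1 n).filter (fun j => (R : ℤ) ≤ w j)).card : ℝ) with hN
    set t : ℝ := (μ₀ {z : ℤ | (R:ℤ) ≤ z}).toReal with ht
    have ht0 : 0 ≤ t := ENNReal.toReal_nonneg
    have htε : t < ε := by
      apply tail_small μ₀ ε hε R hRle
      apply Set.disjoint_left.mpr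
      intro z hz hz2
      simp only [Set.mem_setOf_eq] at hz
      simp only [mid, Set.mem_setOf_eq] at hz2
      omega
    set y : ℝ := N - (ap + a0 * t) * n with hy
    have h2 : |c / (n:ℝ) * y| < c * ε := by
      have he : c / (n:ℝ) * y = (1 / (n : ℝ)) * (N * c)
          - (am * 0 + a0 * (t * c) + ap * c) := by
        rw [hy]; field_simp; ring
      rw [he]; exact h
    have hy2 : |y| < ε * n := abs_div_scale hc hnr h2
    have hd : N - ap * n = y + a0 * t * n := by rw [hy]; ring
    have habs : |N - ap * n| ≤ |y| + a0 * t * n := by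
      rw [hd]
      have h5 : |a0 * t * (n:ℝ)| = a0 * t * n :=
        abs_of_nonneg (mul_nonneg (mul_nonneg ha0 ht0) hnr.le)
      calc |y + a0 * t * (n:ℝ)| ≤ |y| + |a0 * t * (n:ℝ)| := abs_add_le _ _
        _ = |y| + a0 * t * n := by rw [h5]
    have h3 : a0 * t * n ≤ t * n := by
      nlinarith [mul_nonneg (mul_nonneg (sub_nonneg.mpr ha0le) ht0) hnr.le]
    have h4 : t * n < ε * n := mul_lt_mul_of_pos_right htε hnr
    have : |N - ap * n| < 2 * ε * n := by linarith
    exact this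
  · -- singletons
    have key4 : ∀ m : ℤ, |m| ≤ (R:ℤ) → ¬(-(R:ℤ) + 2 ≤ m ∧ m ≤ (R:ℤ) - 2) →
        (((Finset.Icc 1 n).filter (fun j => w j = m)).card : ℝ) < 3 * ε * n := by
      intro m hm1 hm2
      set c' : ℝ := (2:ℝ) ^ (-|m| - 1) with hc'def
      have hc' : (0:ℝ) < c' := two_zpow_pos _
      have habs0 : (0:ℤ) ≤ |m| := abs_nonneg m
      have hc'1 : c' ≤ 1 := two_zpow_le_one (by omega)
      have h := estimate_general am a0 ap ham ha0 hap hsum μ₀ n hn w _ hclose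
        c' hc' hc'1 (fun k => k = m) 0 0 (Or.inl rfl) (Or.inl rfl) (gap_single m)
      set N : ℝ := (((Finset.Icc 1 n).filter (fun j => w j = m)).card : ℝ) with hN
      set t : ℝ := (μ₀ {z : ℤ | z = m}).toReal with ht
      have ht0 : 0 ≤ t := ENNReal.toReal_nonneg
      have htε : t < ε := by
        apply tail_small μ₀ ε hε (R - 1) hRle1
        apply Set.disjoint_left.mpr
        intro z hz hz2
        simp only [Set.mem_setOf_eq] at hz
        simp only [mid, Set.mem_setOf_eq] at hz2
        subst hz
        omega
      set y : ℝ := N - a0 * t * n with hy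
      have hcc' : c * ε ≤ c' * (2 * ε) := by
        have e1 : c' * 2 = (2:ℝ) ^ (-|m|) := by
          rw [hc'def, ← zpow_add_one₀ (by norm_num : (2:ℝ) ≠ 0)]
          norm_num
        have e2 : c ≤ (2:ℝ) ^ (-|m|) :=
          zpow_le_zpow_right₀ (by norm_num) (by omega)
        calc c * ε ≤ (2:ℝ) ^ (-|m|) * ε := mul_le_mul_of_nonneg_right e2 hε.le
          _ = c' * (2 * ε) := by rw [← e1]; ring
      have h2 : |c' / (n:ℝ) * y| < c' * (2 * ε) := by
        have he : c' / (n:ℝ) * y = (1 / (n : ℝ)) * (N * c')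
            - (am * 0 + a0 * (t * c') + ap * 0) := by
          rw [hy]; field_simp; ring
        rw [he]; exact lt_of_lt_of_le h hcc'
      have hy2 : |y| < 2 * ε * n := abs_div_scale hc' hnr h2
      have h3 : a0 * t * n ≤ t * n := by
        nlinarith [mul_nonneg (mul_nonneg (sub_nonneg.mpr ha0le) ht0) hnr.le]
      have h4 : t * n < ε * n := mul_lt_mul_of_pos_right htε hnr
      have h5 : N ≤ |y| + a0 * t * n := by
        have : N = y + a0 * t * n := by rw [hy]; ring
        rw [this]
        have := le_abs_self y
        linarith
      calc N ≤ |y| + a0 * t * n := h5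
        _ < 2 * ε * n + ε * n := by linarith
        _ = 3 * ε * n := by ring
    intro m hm
    simp only [Set.mem_insert_iff, Set.mem_singleton_iff] at hm
    rcases hm with rfl | rfl | rfl | rfl <;>
      exact key4 _ (abs_le.mpr ⟨by omega, by omega⟩) (by omega)
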